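/- (Alignment Lemma.) Let E = [U V] be a 2×2 real matrix with det E > 0, let d ∈ ℝ² be a nonzero vector, N a positive integer, and n an even divisor of N. Identify ℝ² with ℂ. If Im((E^{-1} d)^{n/2}) = 0, then there exists an N-th root of unity ω and a real α > 0 such that E(ω) = α d, i.e. one of the pushed-forward grid directions E(ω_l), where ω_l are the N-th roots of unity viewed as vectors in ℝ², is a positive multiple of d. -/

import Mathlib

open Matrix Complex

/-- Identification of ℝ² with ℂ: `(x,y) ↦ x + iy`. -/
noncomputable def toC (v : Fin 2 → ℝ) : ℂ := v 0 + v 1 * Complex.I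

/-- (Alignment Lemma.) Let `E = [U V]` have positive determinant, `d ≠ 0`,
`n` an even divisor of `N`. If `Im((E⁻¹d)^{n/2}) = 0`, then one of the pushed-forward
grid directions `E(ω)`, `ω` an `N`-th root of unity (viewed as a vector in ℝ²), is a
positive multiple of `d`. -/
theorem stmt6 (N n : ℕ) (hN : 0 < N) (hn : Even n) (hdvd : n ∣ N) (hnpos : 0 < n)
    (E : Matrix (Fin 2) (Fin 2) ℝ) (hdet : 0 < E.det)
    (d : Fin 2 → ℝ) (hd : d ≠ 0)
    (halign : ((toC (E⁻¹ *ᵥ d)) ^ (n / 2)).im = 0) :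
    ∃ ω : ℂ, ω ^ N = 1 ∧ ∃ α : ℝ, 0 < α ∧ E *ᵥ ![ω.re, ω.im] = α • d := by
  have hu : IsUnit E.det := isUnit_iff_ne_zero.mpr hdet.ne'
  set A : Fin 2 → ℝ := E⁻¹ *ᵥ d with hA
  set z : ℂ := toC A with hz
  have hEd : E *ᵥ A = d := by
    rw [hA, Matrix.mulVec_mulVec, Matrix.mul_nonsing_inv _ hu, Matrix.one_mulVec]
  have hAre : z.re = A 0 := by simp [hz, toC]
  have hAim : z.im = A 1 := by simp [hz, toC]
  have hAvec : ![z.re, z.im] = A := by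
    funext i
    fin_cases i <;> simp [hAre, hAim]
  have hz0 : z ≠ 0 := by
    intro h0
    apply hd
    have hA0 : A = 0 := by
      funext i
      fin_cases i
      · have := congrArg Complex.re h0; simpa [hAre] using this
      · have := congrArg Complex.im h0; simpa [hAim] using this
    rw [← hEd, hA0, Matrix.mulVec_zero]
  obtain ⟨m, hm⟩ := hn
  have hm' : n / 2 = m := by omega
  have hmpos : 0 < m := by omega
  rw [hm'] at halign
  -- z^m is real, so z^n = (z^m)^2 is a nonnegative real
  have hzm : (z ^ m) = ((z ^ m).re : ℂ) := by
    exact Complex.ext rfl (by simp [halign])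
  have hzn : z ^ n = (((z ^ m).re : ℂ)) ^ 2 := by
    rw [hm, ← two_mul, pow_mul', ← hzm, sq]
  have habs : (0:ℝ) < ‖z‖ := norm_pos_iff.mpr hz0
  set c : ℝ := (‖z‖)⁻¹ with hc
  have hcpos : 0 < c := by positivity
  refine ⟨c • z, ?_, c, hcpos, ?_⟩
  · -- root of unity
    obtain ⟨k, hk⟩ := hdvd
    have hωn : (c • z) ^ n = 1 := by
      have h1 : (c • z) ^ n = (c : ℂ) ^ n * z ^ n := by
        rw [Complex.real_smul, mul_pow]
      rw [h1, hzn]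
      have habsn : ‖z‖ ^ n = (z ^ m).re ^ 2 := by
        rw [← norm_pow, hzn]
        simp [_root_.sq_abs]
      have h2 : ((z ^ m).re : ℂ) ^ 2 = ((‖z‖ : ℝ) : ℂ) ^ n := by
        exact_mod_cast habsn.symm
      rw [h2, hc]
      push_cast
      rw [← mul_pow, inv_mul_cancel₀ (by exact_mod_cast habs.ne')]
      simp
    rw [hk, pow_mul, hωn, one_pow]
  · -- alignment
    have hre : (c • z).re = c * z.re := by simp [Complex.real_smul]
    have him : (c • z).im = c * z.im := by simp [Complex.real_smul]
    have : ![(c • z).re, (c • z).im] = c • A := by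
      funext i
      fin_cases i <;> simp [hre, him, hAre, hAim]
    rw [this, Matrix.mulVec_smul, hEd]
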